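/- At every nonzero point v ∈ ℂ^4 with g1(v) = 0 and g2(v) = 0, the gradient vectors ∇g1(v) and ∇g2(v) are linearly independent over ℂ. (Equivalently, the complete intersection curve C = {g1 = g2 = 0} ⊂ P^3(ℂ), which has degree 9 and is isomorphic to the modular curve X(9), is a smooth projective curve.) -/

import Mathlib

/-- `g1 = x1²x2 − x2²x4 − x1x4²`. -/
def polyG1 (v : Fin 4 → ℂ) : ℂ := v 0 ^ 2 * v 1 - v 1 ^ 2 * v 3 - v 0 * v 3 ^ 2

/-- `g2 = x1x2² − x3³ + x1²x4 − x2x4²`. -/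
def polyG2 (v : Fin 4 → ℂ) : ℂ := v 0 * v 1 ^ 2 - v 2 ^ 3 + v 0 ^ 2 * v 3 - v 1 * v 3 ^ 2

/-- The gradient of `g1`: `(2x1x2 − x4², x1² − 2x2x4, 0, −x2² − 2x1x4)`. -/
def gradG1 (v : Fin 4 → ℂ) : Fin 4 → ℂ :=
  ![2 * v 0 * v 1 - v 3 ^ 2, v 0 ^ 2 - 2 * v 1 * v 3, 0, -(v 1 ^ 2) - 2 * v 0 * v 3]

/-- The gradient of `g2`: `(x2² + 2x1x4, 2x1x2 − x4², −3x3², x1² − 2x2x4)`. -/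
def gradG2 (v : Fin 4 → ℂ) : Fin 4 → ℂ :=
  ![v 1 ^ 2 + 2 * v 0 * v 3, 2 * v 0 * v 1 - v 3 ^ 2, -3 * v 2 ^ 2, v 0 ^ 2 - 2 * v 1 * v 3]

/-- At every nonzero common zero of `g1` and `g2`, the gradients of `g1` and `g2`
are linearly independent: the complete intersection curve `C = {g1 = g2 = 0} ⊂ P³`
(of degree 9, isomorphic to the modular curve `X(9)`) is smooth. -/
theorem gradients_linearIndependent (v : Fin 4 → ℂ) (hv : v ≠ 0)
    (h1 : polyG1 v = 0) (h2 : polyG2 v = 0) :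
    LinearIndependent ℂ ![gradG1 v, gradG2 v] := by
  rw [LinearIndependent.pair_iff]
  intro s t hst
  simp only [polyG1] at h1
  simp only [polyG2] at h2
  set a := v 0 with hadef
  set b := v 1 with hbdef
  set c := v 2 with hcdef
  set d := v 3 with hddef
  have e0 := congrFun hst 0
  have e1 := congrFun hst 1
  have e2 := congrFun hst 2
  have e3 := congrFun hst 3
  simp only [gradG1, gradG2, Pi.add_apply, Pi.smul_apply, smul_eq_mul, Pi.zero_apply,
    Matrix.cons_val_zero, Matrix.cons_val_one, Matrix.head_cons, Matrix.cons_val_two,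
    Matrix.cons_val_three, Matrix.tail_cons, ← hadef, ← hbdef, ← hcdef, ← hddef] at e0 e1 e2 e3
  -- key fact: the three quantities P, Q, R cannot all vanish
  have keyPQR : 2 * a * b - d ^ 2 = 0 → a ^ 2 - 2 * b * d = 0 → b ^ 2 + 2 * a * d = 0 → False := by
    intro hP hQ hR
    have h9 : (3 * (a * b)) ^ 2 = 0 := by
      linear_combination (4 * a * b) * hP + b ^ 2 * hQ + (2 * b * d) * hR
    have hab : a * b = 0 := by
      have h' := sq_eq_zero_iff.mp h9
      have h3 : (3 : ℂ) ≠ 0 := by norm_num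
      exact (mul_eq_zero.mp h').resolve_left h3
    have hd0 : d = 0 := by
      have : d ^ 2 = 0 := by linear_combination 2 * hab - hP
      exact sq_eq_zero_iff.mp this
    have ha0 : a = 0 := by
      have : a ^ 2 = 0 := by linear_combination hQ + 2 * b * hd0
      exact sq_eq_zero_iff.mp this
    have hb0 : b = 0 := by
      have : b ^ 2 = 0 := by linear_combination hR - 2 * a * hd0
      exact sq_eq_zero_iff.mp this
    have hc0 : c = 0 := by
      have : c ^ 3 = 0 := by linear_combination -h2 + b ^ 2 * ha0 + a * d * ha0 - d ^ 2 * hb0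
      exact pow_eq_zero_iff (by norm_num) |>.mp this
    apply hv
    funext i
    fin_cases i
    · simpa using ha0
    · simpa using hb0
    · simpa using hc0
    · simpa using hd0
  by_cases ht : t = 0
  · subst ht
    refine ⟨?_, rfl⟩
    by_contra hs
    refine keyPQR ?_ ?_ ?_
    · have : s * (2 * a * b - d ^ 2) = 0 := by linear_combination e0
      exact (mul_eq_zero.mp this).resolve_left hs
    · have : s * (a ^ 2 - 2 * b * d) = 0 := by linear_combination e1
      exact (mul_eq_zero.mp this).resolve_left hs
    · have : s * (b ^ 2 + 2 * a * d) = 0 := by linear_combination -e3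
      exact (mul_eq_zero.mp this).resolve_left hs
  · exfalso
    -- t ≠ 0 forces c = 0
    have hc0 : c = 0 := by
      have h' : t * c ^ 2 = 0 := by linear_combination (-1/3 : ℂ) * e2
      have := (mul_eq_zero.mp h').resolve_left ht
      exact sq_eq_zero_iff.mp this
    -- the 2×2 minors of the Jacobian vanish
    have hM1 : (a ^ 2 - 2 * b * d) ^ 2 + (2 * a * b - d ^ 2) * (b ^ 2 + 2 * a * d) = 0 := by
      have h' : t * ((a ^ 2 - 2 * b * d) ^ 2 +
          (2 * a * b - d ^ 2) * (b ^ 2 + 2 * a * d)) = 0 := by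
        linear_combination (a ^ 2 - 2 * b * d) * e3 + (b ^ 2 + 2 * a * d) * e1
      exact (mul_eq_zero.mp h').resolve_left ht
    have hM3 : (2 * a * b - d ^ 2) ^ 2 - (a ^ 2 - 2 * b * d) * (b ^ 2 + 2 * a * d) = 0 := by
      have h' : t * ((2 * a * b - d ^ 2) ^ 2 -
          (a ^ 2 - 2 * b * d) * (b ^ 2 + 2 * a * d)) = 0 := by
        linear_combination (2 * a * b - d ^ 2) * e1 - (a ^ 2 - 2 * b * d) * e0
      exact (mul_eq_zero.mp h').resolve_left ht
    by_cases hP : 2 * a * b - d ^ 2 = 0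
    · -- P = 0 forces Q = R = 0 as well, contradiction
      refine keyPQR hP ?_ ?_
      · have hQ2 : (a ^ 2 - 2 * b * d) ^ 2 = 0 := by
          linear_combination hM1 - (b ^ 2 + 2 * a * d) * hP
        exact sq_eq_zero_iff.mp hQ2
      · have h' : t * (b ^ 2 + 2 * a * d) = 0 := by
          linear_combination e0 - s * hP
        exact (mul_eq_zero.mp h').resolve_left ht
    · -- P ≠ 0 : introduce l = Q/P with l³ = −1
      set l : ℂ := (a ^ 2 - 2 * b * d) / (2 * a * b - d ^ 2) with hldef
      have hQl : l * (2 * a * b - d ^ 2) = a ^ 2 - 2 * b * d := by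
        rw [hldef]; exact div_mul_cancel₀ _ hP
      have hl : l ≠ 0 := by
        intro h0
        apply hP
        have hQ0 : a ^ 2 - 2 * b * d = 0 := by rw [← hQl, h0, zero_mul]
        have : (2 * a * b - d ^ 2) ^ 2 = 0 := by
          linear_combination hM3 + (b ^ 2 + 2 * a * d) * hQ0
        exact sq_eq_zero_iff.mp this
      have hPlR : 2 * a * b - d ^ 2 = l * (b ^ 2 + 2 * a * d) := by
        have := mul_left_cancel₀ hP (show (2 * a * b - d ^ 2) * (2 * a * b - d ^ 2) =
            (2 * a * b - d ^ 2) * (l * (b ^ 2 + 2 * a * d)) by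
          linear_combination hM3 - (b ^ 2 + 2 * a * d) * hQl)
        exact this
      have hl3 : l ^ 3 = -1 := by
        have h30 : (2 * a * b - d ^ 2) ^ 2 * (l ^ 3 + 1) = 0 := by
          linear_combination l * hM1 + (l * (l * (2 * a * b - d ^ 2) + (a ^ 2 - 2 * b * d))) * hQl
            + (2 * a * b - d ^ 2) * hPlR
        rcases mul_eq_zero.mp h30 with h | h
        · exact absurd (sq_eq_zero_iff.mp h) hP
        · linear_combination h
      have hd0' : a * l + b * l ^ 2 - d = 0 := by
        have h' : (2 * a * b - d ^ 2) * (a * l + b * l ^ 2 - d) = 0 := by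
          linear_combination 3 * l * h1 + b * l * hQl - d * hPlR
        exact (mul_eq_zero.mp h').resolve_left hP
      have ha0 : a + b * l + d * l ^ 2 = 0 := by
        linear_combination (-(l ^ 2)) * hd0' + (a + b * l) * hl3
      have hE1 : 3 * b ^ 2 * l ^ 2 - 6 * b * d = 0 := by
        linear_combination -hQl - (a - 3 * b * l - d * l ^ 2) * ha0 - (4 * b * d + d ^ 2 * l) * hl3
      have hE2 : b ^ 2 * l + d ^ 2 = 0 := by
        have h3 : (3 : ℂ) * (b ^ 2 * l + d ^ 2) = 0 := by
          linear_combination -hPlR + (2 * b - 2 * d * l) * ha0 + 2 * d ^ 2 * hl3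
        have : (3 : ℂ) ≠ 0 := by norm_num
        exact (mul_eq_zero.mp h3).resolve_left this
      by_cases hb : b = 0
      · have hd0 : d = 0 := by
          have : d ^ 2 = 0 := by linear_combination hE2 - b * l * hb
          exact sq_eq_zero_iff.mp this
        have ha' : a = 0 := by
          linear_combination ha0 - l * hb - l ^ 2 * hd0
        apply hP
        linear_combination 2 * b * ha' - d * hd0
      · have hbd : b * l ^ 2 - 2 * d = 0 := by
          have h' : b * (3 * (b * l ^ 2 - 2 * d)) = 0 := by linear_combination hE1
          have := (mul_eq_zero.mp h').resolve_left hb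
          have h3 : (3 : ℂ) ≠ 0 := by norm_num
          exact (mul_eq_zero.mp this).resolve_left h3
        have hb2l : (3 : ℂ) * (b ^ 2 * l) = 0 := by
          linear_combination 4 * hE2 + (b * l ^ 2 + 2 * d) * hbd - b ^ 2 * l * hl3
        have h3 : (3 : ℂ) ≠ 0 := by norm_num
        have hb2l' : b ^ 2 * l = 0 := (mul_eq_zero.mp hb2l).resolve_left h3
        rcases mul_eq_zero.mp hb2l' with h | h
        · exact hb (sq_eq_zero_iff.mp h)
        · exact hl h
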